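/- Let (Ω, P) be a probability space and let a₀, a₁, b₀, b₁ : Ω → ℝ be random variables, each taking values in the interval [0,1]. Then Cov(a₀,b₀) + Cov(a₀,b₁) + Cov(a₁,b₀) − Cov(a₁,b₁) ≤ 4/7. -/

import Mathlib

set_option maxHeartbeats 1600000


open MeasureTheory

/-- The covariance of two real random variables:
`Cov(X,Y) := E[(X − E[X])(Y − E[Y])]`. -/
noncomputable def cov {Ω : Type*} [MeasurableSpace Ω] (μ : Measure Ω) (X Y : Ω → ℝ) : ℝ :=
  ∫ ω, (X ω - ∫ ω', X ω' ∂μ) * (Y ω - ∫ ω', Y ω' ∂μ) ∂μ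

section Aux

variable {Ω : Type*} [MeasurableSpace Ω] (μ : Measure Ω) [IsProbabilityMeasure μ]

private lemma chsh_int01 {f : Ω → ℝ} (hf : Measurable f)
    (hr : ∀ ω, f ω ∈ Set.Icc (0:ℝ) 1) : Integrable f μ :=
  (integrable_const 1).mono' hf.aestronglyMeasurable (ae_of_all _ fun ω => by
    rw [Real.norm_eq_abs, abs_le]; exact ⟨by linarith [(hr ω).1], (hr ω).2⟩)

private lemma chsh_mean01 {f : Ω → ℝ} (hf : Measurable f)
    (hr : ∀ ω, f ω ∈ Set.Icc (0:ℝ) 1) : (∫ ω, f ω ∂μ) ∈ Set.Icc (0:ℝ) 1 := by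
  constructor
  · exact integral_nonneg fun ω => (hr ω).1
  · calc ∫ ω, f ω ∂μ ≤ ∫ _ω, (1:ℝ) ∂μ :=
          integral_mono (chsh_int01 μ hf hr) (integrable_const 1) fun ω => (hr ω).2
      _ = 1 := by simp

private lemma chsh_posflip {w : Ω → ℝ} (hw : Integrable w μ) (h0 : ∫ ω, w ω ∂μ = 0) :
    ∫ ω, max (-(w ω)) 0 ∂μ = ∫ ω, max (w ω) 0 ∂μ := by
  have hpt : ∀ ω, max (w ω) 0 = max (-(w ω)) 0 + w ω := fun ω => by
    rcases le_total (w ω) 0 with h | h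
    · rw [max_eq_right h, max_eq_left (by linarith)]; ring
    · rw [max_eq_left h, max_eq_right (by linarith)]; ring
  calc ∫ ω, max (-(w ω)) 0 ∂μ
      = ∫ ω, max (-(w ω)) 0 ∂μ + ∫ ω, w ω ∂μ := by rw [h0, add_zero]
    _ = ∫ ω, (max (-(w ω)) 0 + w ω) ∂μ := (integral_add hw.neg.pos_part hw).symm
    _ = ∫ ω, max (w ω) 0 ∂μ :=
        integral_congr_ae (ae_of_all _ fun ω => (hpt ω).symm)

private lemma chsh_key (p q : ℝ) (hq : 0 ≤ q) (hqp : q ≤ p) (hpq : p + q ≤ 1) :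
    ∃ c0 c1 : ℝ, ∀ b0 b1 : ℝ, 0 ≤ b0 → b0 ≤ 1 → 0 ≤ b1 → b1 ≤ 1 →
      max (b0 + b1 - p - q) 0 + max (b0 - b1 - p + q) 0 ≤
        4/7 + c0 * (b0 - p) + c1 * (b1 - q) := by
  rcases eq_or_lt_of_le (le_trans (le_add_of_nonneg_right hq) hpq) with hp1 | hp1
  · -- p = 1, q = 0
    have hp : p = 1 := by linarith
    have hq0 : q = 0 := by linarith
    refine ⟨0, 3/7, fun b0 b1 h0 h1 h2 h3 => ?_⟩
    subst hp hq0
    have e2 : max (b0 - b1 - 1 + 0) 0 = 0 := max_eq_right (by linarith)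
    rcases le_total (b0 + b1 - 1 - 0) 0 with h | h
    · rw [max_eq_right h, e2]; nlinarith
    · rw [max_eq_left h, e2]; nlinarith
  · rcases le_or_gt (p * (1 - q)) (3/7 - q^2) with hB | hA
    · -- case B
      have hq2 : q ≤ 1/2 := by linarith
      have hd : 0 < 1 - p - q := by nlinarith [sq_nonneg (2*q - 1)]
      refine ⟨(10/7 - 2*p - q + q*(p - q)) / (1 - p - q),
              (3/7 - q - p*(p - q)) / (1 - p - q), fun b0 b1 h0 h1 h2 h3 => ?_⟩
      have hsplit : ((10/7 - 2*p - q + q*(p - q)) * (b0 - p) + (3/7 - q - p*(p - q)) * (b1 - q)) / (1 - p - q)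
          = (10/7 - 2*p - q + q*(p - q)) * (b0 - p) / (1 - p - q) + (3/7 - q - p*(p - q)) * (b1 - q) / (1 - p - q) := add_div _ _ _
      rw [div_mul_eq_mul_div, div_mul_eq_mul_div]
      have main : (max (b0 + b1 - p - q) 0 + max (b0 - b1 - p + q) 0 - 4/7) * (1 - p - q)
          ≤ (10/7 - 2*p - q + q*(p - q)) * (b0 - p) + (3/7 - q - p*(p - q)) * (b1 - q) := ?_
      · have h2' := (le_div_iff₀ hd).2 main
        linarith [h2', hsplit]
      have hB' : (0:ℝ) ≤ 3/7 - q^2 - p*(1 - q) := by linarith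
      have t1 : (0:ℝ) ≤ (4*p + q - 2)^2 := sq_nonneg _
      have t2 : (0:ℝ) ≤ (7*q - 2)^2 := sq_nonneg _
      have t3 : (0:ℝ) ≤ b0 * (1 - p - q) := mul_nonneg h0 (by linarith)
      have t4 : (0:ℝ) ≤ b0 * (3/7 - q^2 - p*(1 - q)) := mul_nonneg h0 hB'
      have t5 : (0:ℝ) ≤ b1 * (3/7 - q^2 - p*(1 - q)) := mul_nonneg h2 hB'
      have t6 : (0:ℝ) ≤ b1 * ((p - q) * (1 - p - q)) :=
        mul_nonneg h2 (mul_nonneg (by linarith) (by linarith))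
      rcases le_total (b0 + b1 - p - q) 0 with e1 | e1 <;>
        rcases le_total (b0 - b1 - p + q) 0 with e2 | e2
      · rw [max_eq_right e1, max_eq_right e2]
        linarith [t1, t2, t3, t4, t5, t6]
      · rw [max_eq_right e1, max_eq_left e2]
        have t17 : (0:ℝ) ≤ (7*q - 2)^2 * b1 := mul_nonneg t2 h2
        have t18 : (0:ℝ) ≤ (4*p + q - 2)^2 * (1 - b1) := mul_nonneg t1 (by linarith)
        have t19 : (0:ℝ) ≤ (8*p + 8*q - 6)^2 * (1 - b1) := mul_nonneg (sq_nonneg _) (by linarith)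
        have t15 : (0:ℝ) ≤ (p - q) * (1 - p - q) := mul_nonneg (by linarith) (by linarith)
        have t16 : (0:ℝ) ≤ (p - q) * (p - q) := mul_nonneg (by linarith) (by linarith)
        have t20 : (0:ℝ) ≤ b1 * (p - q) := mul_nonneg h2 (by linarith)
        have t21 : (0:ℝ) ≤ b1 * (1 - p - q) := mul_nonneg h2 (by linarith)
        linarith [t2, t4, t5, t15, t16, t17, t18, t19, t20, t21]
      · rw [max_eq_left e1, max_eq_right e2]
        have t7 : (0:ℝ) ≤ (1 - b1) * (3/7 - q^2 - p*(1 - q)) := mul_nonneg (by linarith) hB'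
        have t8 : (0:ℝ) ≤ (1 - b1) * ((p - q) * (p - q)) :=
          mul_nonneg (by linarith) (mul_nonneg (by linarith) (by linarith))
        linarith [t4, t7, t8]
      · rw [max_eq_left e1, max_eq_left e2]
        have t9 : (0:ℝ) ≤ (1 - b0) * (p - q) := mul_nonneg (by linarith) (by linarith)
        have t10 : (0:ℝ) ≤ (1 - b0) * (1 - p - q) := mul_nonneg (by linarith) (by linarith)
        have t11 : (0:ℝ) ≤ (1 - b0) * (q * q) := mul_nonneg (by linarith) (mul_nonneg hq hq)
        have t12 : (0:ℝ) ≤ (1 - b0) * (q * (1 - p - q)) :=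
          mul_nonneg (by linarith) (mul_nonneg hq (by linarith))
        have t13 : (0:ℝ) ≤ (1 - b0) * ((p - q) * (p - q)) :=
          mul_nonneg (by linarith) (mul_nonneg (by linarith) (by linarith))
        have t14 : (0:ℝ) ≤ (1 - b0) * ((p - q) * (1 - p - q)) :=
          mul_nonneg (by linarith) (mul_nonneg (by linarith) (by linarith))
        linarith [t5, t6, t9, t10, t11, t12, t13, t14]
    · -- case A
      have hp : p < 1 := by nlinarith
      have hd : 0 < 1 - p := by linarith
      refine ⟨(10/7 - 2*p + q*(p - q)) / (1 - p), p - q, fun b0 b1 h0 h1 h2 h3 => ?_⟩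
      rw [div_mul_eq_mul_div]
      have main : (max (b0 + b1 - p - q) 0 + max (b0 - b1 - p + q) 0 - 4/7 - (p - q) * (b1 - q)) * (1 - p)
          ≤ (10/7 - 2*p + q*(p - q)) * (b0 - p) := ?_
      · have h2' := (le_div_iff₀ hd).2 main
        linarith [h2']
      have hA' : (0:ℝ) ≤ p*(1 - q) - 3/7 + q^2 := by linarith
      have hd' : (0:ℝ) ≤ 1 - p - q := by linarith
      have hqp' : (0:ℝ) ≤ p - q := by linarith
      rcases le_total (b0 + b1 - p - q) 0 with e1 | e1 <;>
        rcases le_total (b0 - b1 - p + q) 0 with e2 | e2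
      · rw [max_eq_right e1, max_eq_right e2]
        have u1 : (0:ℝ) ≤ (1 - b0) * (4*p - q - 2)^2 := mul_nonneg (by linarith) (sq_nonneg _)
        have u2 : (0:ℝ) ≤ (1 - b0) * (7*q - 2)^2 := mul_nonneg (by linarith) (sq_nonneg _)
        have u3 : (0:ℝ) ≤ b0 * (q * q) := mul_nonneg h0 (mul_nonneg hq hq)
        have u4 : (0:ℝ) ≤ b0 * (q * (1 - p - q)) := mul_nonneg h0 (mul_nonneg hq hd')
        have u5 : (0:ℝ) ≤ b0 * ((1 - p - q) * (1 - p - q)) := mul_nonneg h0 (mul_nonneg hd' hd')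
        have u6 : (0:ℝ) ≤ b1 * (q * (p - q)) := mul_nonneg h2 (mul_nonneg hq hqp')
        have u7 : (0:ℝ) ≤ b1 * ((p - q) * (1 - p - q)) := mul_nonneg h2 (mul_nonneg hqp' hd')
        linarith [u1, u2, u3, u4, u5, u6, u7]
      · rw [max_eq_right e1, max_eq_left e2]
        have v1 : (0:ℝ) ≤ (1 - b0) * (1 - p - q) := mul_nonneg (by linarith) hd'
        have v2 : (0:ℝ) ≤ (1 - b0) * (7*q - 2)^2 := mul_nonneg (by linarith) (sq_nonneg _)
        have v3 : (0:ℝ) ≤ b1 * q := mul_nonneg h2 hq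
        have v4 : (0:ℝ) ≤ b1 * (1 - p - q) := mul_nonneg h2 hd'
        have v5 : (0:ℝ) ≤ b1 * (7*q - 2)^2 := mul_nonneg h2 (sq_nonneg _)
        have v6 : (0:ℝ) ≤ (1 - p - q) * (1 - p - q) := mul_nonneg hd' hd'
        have v7 : (0:ℝ) ≤ (1 - p - q) * (p*(1 - q) - 3/7 + q^2) := mul_nonneg hd' hA'
        have v8 : (0:ℝ) ≤ (1 - p - q) * (4*p - q - 2)^2 := mul_nonneg hd' (sq_nonneg _)
        have v9 : (0:ℝ) ≤ (p*(1 - q) - 3/7 + q^2) * (p + q - b0 - b1) := mul_nonneg hA' (by linarith)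
        have v10 : (0:ℝ) ≤ (4*p - q - 2)^2 * (p + q - b0 - b1) := mul_nonneg (sq_nonneg _) (by linarith)
        have v11 : (0:ℝ) ≤ b0 * (q * (1 - p - q)) := mul_nonneg h0 (mul_nonneg hq hd')
        have v12 : (0:ℝ) ≤ b0 * ((1 - p - q) * (1 - p - q)) := mul_nonneg h0 (mul_nonneg hd' hd')
        have v13 : (0:ℝ) ≤ (1 - b0) * (q * (p - q)) := mul_nonneg (by linarith) (mul_nonneg hq hqp')
        have v14 : (0:ℝ) ≤ (1 - b0) * ((p - q) * (1 - p - q)) := mul_nonneg (by linarith) (mul_nonneg hqp' hd')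
        linarith [v1, v2, v3, v4, v5, v6, v7, v8, v9, v10, v11, v12, v13, v14]
      · rw [max_eq_left e1, max_eq_right e2]
        have w1 : (0:ℝ) ≤ (1 - b0) * (p*(1 - q) - 3/7 + q^2) := mul_nonneg (by linarith) hA'
        have w2 : (0:ℝ) ≤ (1 - b1) * (q * q) := mul_nonneg (by linarith) (mul_nonneg hq hq)
        have w3 : (0:ℝ) ≤ (1 - b1) * (q * (1 - p - q)) := mul_nonneg (by linarith) (mul_nonneg hq hd')
        have w4 : (0:ℝ) ≤ (1 - b1) * ((1 - p - q) * (1 - p - q)) := mul_nonneg (by linarith) (mul_nonneg hd' hd')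
        linarith [w1, w2, w3, w4]
      · rw [max_eq_left e1, max_eq_left e2]
        have x1 : (0:ℝ) ≤ (1 - b0) * q := mul_nonneg (by linarith) hq
        have x2 : (0:ℝ) ≤ (1 - b0) * (1 - p - q) := mul_nonneg (by linarith) hd'
        have x3 : (0:ℝ) ≤ (1 - b0) * (p*(1 - q) - 3/7 + q^2) := mul_nonneg (by linarith) hA'
        have x4 : (0:ℝ) ≤ b1 * (q * (p - q)) := mul_nonneg h2 (mul_nonneg hq hqp')
        have x5 : (0:ℝ) ≤ b1 * ((p - q) * (1 - p - q)) := mul_nonneg h2 (mul_nonneg hqp' hd')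
        linarith [x1, x2, x3, x4, x5]

private lemma chsh_mean (X Y : Ω → ℝ) (hX : Measurable X) (hY : Measurable Y)
    (hXr : ∀ ω, X ω ∈ Set.Icc (0:ℝ) 1) (hYr : ∀ ω, Y ω ∈ Set.Icc (0:ℝ) 1)
    (hq : 0 ≤ ∫ ω, Y ω ∂μ) (hqp : (∫ ω, Y ω ∂μ) ≤ ∫ ω, X ω ∂μ)
    (hpq : (∫ ω, X ω ∂μ) + (∫ ω, Y ω ∂μ) ≤ 1) :
    (∫ ω, max (X ω + Y ω - (∫ x, X x ∂μ) - (∫ x, Y x ∂μ)) 0 ∂μ) +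
      (∫ ω, max (X ω - Y ω - (∫ x, X x ∂μ) + (∫ x, Y x ∂μ)) 0 ∂μ) ≤ 4/7 := by
  set p := ∫ x, X x ∂μ with hp
  set q := ∫ x, Y x ∂μ with hq'
  obtain ⟨c0, c1, hkey⟩ := chsh_key p q hq hqp hpq
  have hXi : Integrable X μ := chsh_int01 μ hX hXr
  have hYi : Integrable Y μ := chsh_int01 μ hY hYr
  have hw1 : Integrable (fun ω => X ω + Y ω - p - q) μ :=
    ((hXi.add hYi).sub (integrable_const p)).sub (integrable_const q)
  have hw2 : Integrable (fun ω => X ω - Y ω - p + q) μ :=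
    ((hXi.sub hYi).sub (integrable_const p)).add (integrable_const q)
  have hf1 : Integrable (fun ω => max (X ω + Y ω - p - q) 0) μ := hw1.pos_part
  have hf2 : Integrable (fun ω => max (X ω - Y ω - p + q) 0) μ := hw2.pos_part
  have hrhs : Integrable (fun ω => 4/7 + c0 * (X ω - p) + c1 * (Y ω - q)) μ :=
    ((integrable_const (4/7)).add (((hXi.sub (integrable_const p)).const_mul c0))).add
      ((hYi.sub (integrable_const q)).const_mul c1)
  have hmono : (∫ ω, (max (X ω + Y ω - p - q) 0 + max (X ω - Y ω - p + q) 0) ∂μ) ≤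
      ∫ ω, (4/7 + c0 * (X ω - p) + c1 * (Y ω - q)) ∂μ :=
    integral_mono (hf1.add hf2) hrhs fun ω =>
      hkey (X ω) (Y ω) (hXr ω).1 (hXr ω).2 (hYr ω).1 (hYr ω).2
  have hX0 : (∫ ω, c0 * (X ω - p) ∂μ) = 0 := by
    rw [integral_const_mul, integral_sub hXi (integrable_const p), integral_const]
    simp; exact Or.inr (sub_self _)
  have hY0 : (∫ ω, c1 * (Y ω - q) ∂μ) = 0 := by
    rw [integral_const_mul, integral_sub hYi (integrable_const q), integral_const]
    simp; exact Or.inr (sub_self _)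
  have hcalc : (∫ ω, (4/7 + c0 * (X ω - p) + c1 * (Y ω - q)) ∂μ) = 4/7 := by
    have e1 : (∫ ω, (4/7 + c0 * (X ω - p) + c1 * (Y ω - q)) ∂μ)
        = (∫ ω, (4/7 + c0 * (X ω - p)) ∂μ) + ∫ ω, c1 * (Y ω - q) ∂μ :=
      integral_add ((integrable_const (4/7)).add
        ((hXi.sub (integrable_const p)).const_mul c0))
        ((hYi.sub (integrable_const q)).const_mul c1)
    have e2 : (∫ ω, (4/7 + c0 * (X ω - p)) ∂μ)
        = (∫ ω, (4/7 : ℝ) ∂μ) + ∫ ω, c0 * (X ω - p) ∂μ :=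
      integral_add (integrable_const (4/7)) ((hXi.sub (integrable_const p)).const_mul c0)
    rw [e1, e2, hX0, hY0, integral_const]
    simp
  rw [← integral_add hf1 hf2]
  rw [hcalc] at hmono
  exact hmono

end Aux

/-- Covariance formulation of the Bell-CHSH inequality for `[0,1]`-valued random variables:
`Cov(a₀,b₀) + Cov(a₀,b₁) + Cov(a₁,b₀) − Cov(a₁,b₁) ≤ 4/7`. -/
theorem covariance_CHSH {Ω : Type*} [MeasurableSpace Ω] (μ : Measure Ω)
    [IsProbabilityMeasure μ] (a₀ a₁ b₀ b₁ : Ω → ℝ)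
    (ha₀ : Measurable a₀) (ha₁ : Measurable a₁)
    (hb₀ : Measurable b₀) (hb₁ : Measurable b₁)
    (ha₀r : ∀ ω, a₀ ω ∈ Set.Icc (0 : ℝ) 1) (ha₁r : ∀ ω, a₁ ω ∈ Set.Icc (0 : ℝ) 1)
    (hb₀r : ∀ ω, b₀ ω ∈ Set.Icc (0 : ℝ) 1) (hb₁r : ∀ ω, b₁ ω ∈ Set.Icc (0 : ℝ) 1) :
    cov μ a₀ b₀ + cov μ a₀ b₁ + cov μ a₁ b₀ - cov μ a₁ b₁ ≤ 4 / 7 := by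
  have ha₀i : Integrable a₀ μ := chsh_int01 μ ha₀ ha₀r
  have ha₁i : Integrable a₁ μ := chsh_int01 μ ha₁ ha₁r
  have hb₀i : Integrable b₀ μ := chsh_int01 μ hb₀ hb₀r
  have hb₁i : Integrable b₁ μ := chsh_int01 μ hb₁ hb₁r
  have hα₀ := chsh_mean01 μ ha₀ ha₀r
  have hα₁ := chsh_mean01 μ ha₁ ha₁r
  have hβ₀ := chsh_mean01 μ hb₀ hb₀r
  have hβ₁ := chsh_mean01 μ hb₁ hb₁r
  set α₀ := ∫ ω', a₀ ω' ∂μ with hα₀d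
  set α₁ := ∫ ω', a₁ ω' ∂μ with hα₁d
  set β₀ := ∫ ω', b₀ ω' ∂μ with hβ₀d
  set β₁ := ∫ ω', b₁ ω' ∂μ with hβ₁d
  -- integrable products
  have hprod : ∀ (f g : Ω → ℝ), Measurable f → Measurable g →
      (∀ ω, f ω ∈ Set.Icc (0:ℝ) 1) → (∀ ω, g ω ∈ Set.Icc (0:ℝ) 1) →
      ∀ cf cg : ℝ, cf ∈ Set.Icc (0:ℝ) 1 → cg ∈ Set.Icc (0:ℝ) 1 →
      Integrable (fun ω => (f ω - cf) * (g ω - cg)) μ := by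
    intro f g hf hg hfr hgr cf cg hcf hcg
    refine (integrable_const 1).mono'
      (((hf.sub measurable_const).mul (hg.sub measurable_const)).aestronglyMeasurable)
      (ae_of_all _ fun ω => ?_)
    rw [Real.norm_eq_abs, abs_mul]
    have h1 : |f ω - cf| ≤ 1 := abs_le.2 ⟨by linarith [(hfr ω).1, hcf.2], by linarith [(hfr ω).2, hcf.1]⟩
    have h2 : |g ω - cg| ≤ 1 := abs_le.2 ⟨by linarith [(hgr ω).1, hcg.2], by linarith [(hgr ω).2, hcg.1]⟩
    exact mul_le_one₀ h1 (abs_nonneg _) h2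
  have hP00 := hprod a₀ b₀ ha₀ hb₀ ha₀r hb₀r α₀ β₀ hα₀ hβ₀
  have hP01 := hprod a₀ b₁ ha₀ hb₁ ha₀r hb₁r α₀ β₁ hα₀ hβ₁
  have hP10 := hprod a₁ b₀ ha₁ hb₀ ha₁r hb₀r α₁ β₀ hα₁ hβ₀
  have hP11 := hprod a₁ b₁ ha₁ hb₁ ha₁r hb₁r α₁ β₁ hα₁ hβ₁
  -- the centered sums
  have hw1i : Integrable (fun ω => (b₀ ω - β₀) + (b₁ ω - β₁)) μ :=
    (hb₀i.sub (integrable_const β₀)).add (hb₁i.sub (integrable_const β₁))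
  have hw2i : Integrable (fun ω => (b₀ ω - β₀) - (b₁ ω - β₁)) μ :=
    (hb₀i.sub (integrable_const β₀)).sub (hb₁i.sub (integrable_const β₁))
  have hb₀0 : (∫ ω, (b₀ ω - β₀) ∂μ) = 0 := by
    rw [integral_sub hb₀i (integrable_const β₀), integral_const]; simp; exact sub_self _
  have hb₁0 : (∫ ω, (b₁ ω - β₁) ∂μ) = 0 := by
    rw [integral_sub hb₁i (integrable_const β₁), integral_const]; simp; exact sub_self _
  have hw1_0 : (∫ ω, ((b₀ ω - β₀) + (b₁ ω - β₁)) ∂μ) = 0 := by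
    have e : (∫ ω, ((b₀ ω - β₀) + (b₁ ω - β₁)) ∂μ)
        = (∫ ω, (b₀ ω - β₀) ∂μ) + ∫ ω, (b₁ ω - β₁) ∂μ :=
      integral_add (hb₀i.sub (integrable_const β₀)) (hb₁i.sub (integrable_const β₁))
    rw [e, hb₀0, hb₁0]; ring
  have hw2_0 : (∫ ω, ((b₀ ω - β₀) - (b₁ ω - β₁)) ∂μ) = 0 := by
    have e : (∫ ω, ((b₀ ω - β₀) - (b₁ ω - β₁)) ∂μ)
        = (∫ ω, (b₀ ω - β₀) ∂μ) - ∫ ω, (b₁ ω - β₁) ∂μ :=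
      integral_sub (hb₀i.sub (integrable_const β₀)) (hb₁i.sub (integrable_const β₁))
    rw [e, hb₀0, hb₁0]; ring
  have hmax1 : Integrable (fun ω => max ((b₀ ω - β₀) + (b₁ ω - β₁)) 0) μ := hw1i.pos_part
  have hmax2 : Integrable (fun ω => max ((b₀ ω - β₀) - (b₁ ω - β₁)) 0) μ := hw2i.pos_part
  -- Step 1 : bound the covariance sum
  have step1 : cov μ a₀ b₀ + cov μ a₀ b₁ + cov μ a₁ b₀ - cov μ a₁ b₁ ≤
      (∫ ω, max ((b₀ ω - β₀) + (b₁ ω - β₁)) 0 ∂μ) +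
        (∫ ω, max ((b₀ ω - β₀) - (b₁ ω - β₁)) 0 ∂μ) := by
    have ecov : cov μ a₀ b₀ + cov μ a₀ b₁ + cov μ a₁ b₀ - cov μ a₁ b₁
        = ∫ ω, ((a₀ ω - α₀) * ((b₀ ω - β₀) + (b₁ ω - β₁))
            + (a₁ ω - α₁) * ((b₀ ω - β₀) - (b₁ ω - β₁))) ∂μ := by
      show (∫ ω, (a₀ ω - α₀) * (b₀ ω - β₀) ∂μ) + (∫ ω, (a₀ ω - α₀) * (b₁ ω - β₁) ∂μ)
          + (∫ ω, (a₁ ω - α₁) * (b₀ ω - β₀) ∂μ) - (∫ ω, (a₁ ω - α₁) * (b₁ ω - β₁) ∂μ) = _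
      have eA : (∫ ω, ((a₀ ω - α₀) * (b₀ ω - β₀) + (a₀ ω - α₀) * (b₁ ω - β₁)) ∂μ)
          = (∫ ω, (a₀ ω - α₀) * (b₀ ω - β₀) ∂μ) + ∫ ω, (a₀ ω - α₀) * (b₁ ω - β₁) ∂μ :=
        integral_add hP00 hP01
      have eB : (∫ ω, (((a₀ ω - α₀) * (b₀ ω - β₀) + (a₀ ω - α₀) * (b₁ ω - β₁))
            + (a₁ ω - α₁) * (b₀ ω - β₀)) ∂μ)
          = (∫ ω, ((a₀ ω - α₀) * (b₀ ω - β₀) + (a₀ ω - α₀) * (b₁ ω - β₁)) ∂μ)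
            + ∫ ω, (a₁ ω - α₁) * (b₀ ω - β₀) ∂μ :=
        integral_add (hP00.add hP01) hP10
      have eC : (∫ ω, ((((a₀ ω - α₀) * (b₀ ω - β₀) + (a₀ ω - α₀) * (b₁ ω - β₁))
            + (a₁ ω - α₁) * (b₀ ω - β₀)) - (a₁ ω - α₁) * (b₁ ω - β₁)) ∂μ)
          = (∫ ω, (((a₀ ω - α₀) * (b₀ ω - β₀) + (a₀ ω - α₀) * (b₁ ω - β₁))
            + (a₁ ω - α₁) * (b₀ ω - β₀)) ∂μ)
            - ∫ ω, (a₁ ω - α₁) * (b₁ ω - β₁) ∂μ :=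
        integral_sub ((hP00.add hP01).add hP10) hP11
      rw [← eA, ← eB, ← eC]
      exact integral_congr_ae (ae_of_all _ fun ω => by ring)
    rw [ecov]
    have hptw : ∀ (a α w : ℝ), 0 ≤ a → a ≤ 1 → (a - α) * w ≤ max w 0 - α * w := by
      intro a α w h0 h1
      rcases le_total w 0 with h | h
      · rw [max_eq_right h]; nlinarith
      · rw [max_eq_left h]; nlinarith
    have hrhsi : Integrable (fun ω => (max ((b₀ ω - β₀) + (b₁ ω - β₁)) 0
        - α₀ * ((b₀ ω - β₀) + (b₁ ω - β₁)))
        + (max ((b₀ ω - β₀) - (b₁ ω - β₁)) 0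
        - α₁ * ((b₀ ω - β₀) - (b₁ ω - β₁)))) μ :=
      (hmax1.sub (hw1i.const_mul α₀)).add (hmax2.sub (hw2i.const_mul α₁))
    have hlhsi : Integrable (fun ω => (a₀ ω - α₀) * ((b₀ ω - β₀) + (b₁ ω - β₁))
        + (a₁ ω - α₁) * ((b₀ ω - β₀) - (b₁ ω - β₁))) μ := by
      have e1 : Integrable (fun ω => (a₀ ω - α₀) * (b₀ ω - β₀)
          + (a₀ ω - α₀) * (b₁ ω - β₁)
          + ((a₁ ω - α₁) * (b₀ ω - β₀) - (a₁ ω - α₁) * (b₁ ω - β₁))) μ :=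
        (hP00.add hP01).add (hP10.sub hP11)
      exact e1.congr (ae_of_all _ fun ω => by ring)
    have hm : (∫ ω, ((a₀ ω - α₀) * ((b₀ ω - β₀) + (b₁ ω - β₁))
        + (a₁ ω - α₁) * ((b₀ ω - β₀) - (b₁ ω - β₁))) ∂μ) ≤
        ∫ ω, ((max ((b₀ ω - β₀) + (b₁ ω - β₁)) 0
          - α₀ * ((b₀ ω - β₀) + (b₁ ω - β₁)))
          + (max ((b₀ ω - β₀) - (b₁ ω - β₁)) 0
          - α₁ * ((b₀ ω - β₀) - (b₁ ω - β₁)))) ∂μ := by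
      refine integral_mono hlhsi hrhsi fun ω => ?_
      have g1 := hptw (a₀ ω) α₀ ((b₀ ω - β₀) + (b₁ ω - β₁)) (ha₀r ω).1 (ha₀r ω).2
      have g2 := hptw (a₁ ω) α₁ ((b₀ ω - β₀) - (b₁ ω - β₁)) (ha₁r ω).1 (ha₁r ω).2
      linarith
    have hre : (∫ ω, ((max ((b₀ ω - β₀) + (b₁ ω - β₁)) 0
          - α₀ * ((b₀ ω - β₀) + (b₁ ω - β₁)))
          + (max ((b₀ ω - β₀) - (b₁ ω - β₁)) 0
          - α₁ * ((b₀ ω - β₀) - (b₁ ω - β₁)))) ∂μ)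
        = (∫ ω, max ((b₀ ω - β₀) + (b₁ ω - β₁)) 0 ∂μ) +
            (∫ ω, max ((b₀ ω - β₀) - (b₁ ω - β₁)) 0 ∂μ) := by
      have eA : (∫ ω, ((max ((b₀ ω - β₀) + (b₁ ω - β₁)) 0
            - α₀ * ((b₀ ω - β₀) + (b₁ ω - β₁)))
            + (max ((b₀ ω - β₀) - (b₁ ω - β₁)) 0
            - α₁ * ((b₀ ω - β₀) - (b₁ ω - β₁)))) ∂μ)
          = (∫ ω, (max ((b₀ ω - β₀) + (b₁ ω - β₁)) 0
            - α₀ * ((b₀ ω - β₀) + (b₁ ω - β₁))) ∂μ)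
            + ∫ ω, (max ((b₀ ω - β₀) - (b₁ ω - β₁)) 0
            - α₁ * ((b₀ ω - β₀) - (b₁ ω - β₁))) ∂μ :=
        integral_add (hmax1.sub (hw1i.const_mul α₀)) (hmax2.sub (hw2i.const_mul α₁))
      have eB : (∫ ω, (max ((b₀ ω - β₀) + (b₁ ω - β₁)) 0
            - α₀ * ((b₀ ω - β₀) + (b₁ ω - β₁))) ∂μ)
          = (∫ ω, max ((b₀ ω - β₀) + (b₁ ω - β₁)) 0 ∂μ)
            - ∫ ω, α₀ * ((b₀ ω - β₀) + (b₁ ω - β₁)) ∂μ :=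
        integral_sub hmax1 (hw1i.const_mul α₀)
      have eC : (∫ ω, (max ((b₀ ω - β₀) - (b₁ ω - β₁)) 0
            - α₁ * ((b₀ ω - β₀) - (b₁ ω - β₁))) ∂μ)
          = (∫ ω, max ((b₀ ω - β₀) - (b₁ ω - β₁)) 0 ∂μ)
            - ∫ ω, α₁ * ((b₀ ω - β₀) - (b₁ ω - β₁)) ∂μ :=
        integral_sub hmax2 (hw2i.const_mul α₁)
      rw [eA, eB, eC, integral_const_mul, integral_const_mul, hw1_0, hw2_0]
      ring
    rw [hre] at hm
    exact hm
  refine le_trans step1 ?_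
  -- Step 2 : case analysis on the means
  rcases le_total (β₀ + β₁) 1 with hs | hs
  · rcases le_total β₁ β₀ with hc | hc
    · -- use X = b₀, Y = b₁
      have h := chsh_mean μ b₀ b₁ hb₀ hb₁ hb₀r hb₁r hβ₁.1 hc hs
      have e1 : (∫ ω, max ((b₀ ω - β₀) + (b₁ ω - β₁)) 0 ∂μ)
          = ∫ ω, max (b₀ ω + b₁ ω - β₀ - β₁) 0 ∂μ :=
        integral_congr_ae (ae_of_all _ fun ω => by congr 1; ring)
      have e2 : (∫ ω, max ((b₀ ω - β₀) - (b₁ ω - β₁)) 0 ∂μ)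
          = ∫ ω, max (b₀ ω - b₁ ω - β₀ + β₁) 0 ∂μ :=
        integral_congr_ae (ae_of_all _ fun ω => by congr 1; ring)
      rw [e1, e2]
      exact h
    · -- use X = b₁, Y = b₀
      have h := chsh_mean μ b₁ b₀ hb₁ hb₀ hb₁r hb₀r hβ₀.1 hc (by linarith)
      have e1 : (∫ ω, max ((b₀ ω - β₀) + (b₁ ω - β₁)) 0 ∂μ)
          = ∫ ω, max (b₁ ω + b₀ ω - β₁ - β₀) 0 ∂μ :=
        integral_congr_ae (ae_of_all _ fun ω => by congr 1; ring)
      have e2 : (∫ ω, max ((b₀ ω - β₀) - (b₁ ω - β₁)) 0 ∂μ)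
          = ∫ ω, max (b₁ ω - b₀ ω - β₁ + β₀) 0 ∂μ := by
        have hf := chsh_posflip μ hw2i hw2_0
        rw [← hf]
        exact integral_congr_ae (ae_of_all _ fun ω => by congr 1; ring)
      rw [e1, e2]
      exact h
  · have hXm : Measurable (fun ω => 1 - b₀ ω) := measurable_const.sub hb₀
    have hYm : Measurable (fun ω => 1 - b₁ ω) := measurable_const.sub hb₁
    have hXr : ∀ ω, (1 - b₀ ω) ∈ Set.Icc (0:ℝ) 1 := fun ω =>
      ⟨by linarith [(hb₀r ω).2], by linarith [(hb₀r ω).1]⟩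
    have hYr : ∀ ω, (1 - b₁ ω) ∈ Set.Icc (0:ℝ) 1 := fun ω =>
      ⟨by linarith [(hb₁r ω).2], by linarith [(hb₁r ω).1]⟩
    have eX : (∫ x, (1 - b₀ x) ∂μ) = 1 - β₀ := by
      rw [integral_sub (integrable_const 1) hb₀i, integral_const]; simp; rfl
    have eY : (∫ x, (1 - b₁ x) ∂μ) = 1 - β₁ := by
      rw [integral_sub (integrable_const 1) hb₁i, integral_const]; simp; rfl
    rcases le_total β₁ β₀ with hc | hc
    · -- use X = 1 - b₁, Y = 1 - b₀
      have h := chsh_mean μ (fun ω => 1 - b₁ ω) (fun ω => 1 - b₀ ω) hYm hXm hYr hXr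
        (by rw [eX]; linarith [hβ₀.2]) (by rw [eX, eY]; linarith) (by rw [eX, eY]; linarith)
      rw [eX, eY] at h
      have e1 : (∫ ω, max ((b₀ ω - β₀) + (b₁ ω - β₁)) 0 ∂μ)
          = ∫ ω, max ((1 - b₁ ω) + (1 - b₀ ω) - (1 - β₁) - (1 - β₀)) 0 ∂μ := by
        have hf := chsh_posflip μ hw1i hw1_0
        rw [← hf]
        exact integral_congr_ae (ae_of_all _ fun ω => by congr 1; ring)
      have e2 : (∫ ω, max ((b₀ ω - β₀) - (b₁ ω - β₁)) 0 ∂μ)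
          = ∫ ω, max ((1 - b₁ ω) - (1 - b₀ ω) - (1 - β₁) + (1 - β₀)) 0 ∂μ :=
        integral_congr_ae (ae_of_all _ fun ω => by congr 1; ring)
      rw [e1, e2]
      exact h
    · -- use X = 1 - b₀, Y = 1 - b₁
      have h := chsh_mean μ (fun ω => 1 - b₀ ω) (fun ω => 1 - b₁ ω) hXm hYm hXr hYr
        (by rw [eY]; linarith [hβ₁.2]) (by rw [eX, eY]; linarith) (by rw [eX, eY]; linarith)
      rw [eX, eY] at h
      have e1 : (∫ ω, max ((b₀ ω - β₀) + (b₁ ω - β₁)) 0 ∂μ)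
          = ∫ ω, max ((1 - b₀ ω) + (1 - b₁ ω) - (1 - β₀) - (1 - β₁)) 0 ∂μ := by
        have hf := chsh_posflip μ hw1i hw1_0
        rw [← hf]
        exact integral_congr_ae (ae_of_all _ fun ω => by congr 1; ring)
      have e2 : (∫ ω, max ((b₀ ω - β₀) - (b₁ ω - β₁)) 0 ∂μ)
          = ∫ ω, max ((1 - b₀ ω) - (1 - b₁ ω) - (1 - β₀) + (1 - β₁)) 0 ∂μ := by
        have hf := chsh_posflip μ hw2i hw2_0
        rw [← hf]
        exact integral_congr_ae (ae_of_all _ fun ω => by congr 1; ring)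
      rw [e1, e2]
      exact h
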